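/- Let T_1,...,T_m be i.i.d. with continuous CDF F, let t_CS satisfy F(t_CS) ≥ 1 - α for α ∈ (0,1), and on {T_{(1)} ≤ t_CS} define k*_s = max{k : T_{(k)} ≤ t_CS}. Then P_m(1 - F(T_{(k*_s)}) > α) ≤ (2 - α - F(t_CS))^m - (1 - F(t_CS))^m. -/

import Mathlib

open MeasureTheory ProbabilityTheory

/-- The `k`-th (0-based) order statistic of a finite vector of reals. -/
noncomputable def orderStat {m : ℕ} (v : Fin m → ℝ) (k : Fin m) : ℝ :=
  ((List.ofFn v).mergeSort (· ≤ ·)).get (Fin.cast (by simp) k)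

/-- The surrogate index `k*_s = max{k : T₍ₖ₎ ≤ t}` (0-based; junk value when no order statistic
is below the threshold). -/
noncomputable def kstarIdx {m : ℕ} (hm : 0 < m) (v : Fin m → ℝ) (t : ℝ) : Fin m :=
  if h : ((Finset.univ : Finset (Fin m)).filter (fun k => orderStat v k ≤ t)).Nonempty
  then Finset.max' _ h else ⟨0, hm⟩

lemma orderStat_mono {m : ℕ} (v : Fin m → ℝ) {j k : Fin m} (h : j ≤ k) :
    orderStat v j ≤ orderStat v k := by
  have hs : List.Pairwise (· ≤ ·) ((List.ofFn v).mergeSort (· ≤ ·)) :=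
    List.pairwise_mergeSort' _ _
  exact hs.rel_get_of_le h

lemma orderStat_mem {m : ℕ} (v : Fin m → ℝ) (k : Fin m) : ∃ i, orderStat v k = v i := by
  have hmem : orderStat v k ∈ (List.ofFn v).mergeSort (· ≤ ·) := List.get_mem _ _
  have h2 := ((List.ofFn v).mergeSort_perm (· ≤ ·)).mem_iff.mp hmem
  rw [List.mem_ofFn] at h2
  obtain ⟨i, hi⟩ := h2
  exact ⟨i, hi.symm⟩

lemma exists_orderStat_eq {m : ℕ} (v : Fin m → ℝ) (i : Fin m) :
    ∃ k, orderStat v k = v i := by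
  have hmem : v i ∈ (List.ofFn v).mergeSort (· ≤ ·) :=
    ((List.ofFn v).mergeSort_perm (· ≤ ·)).mem_iff.mpr (by rw [List.mem_ofFn]; exact ⟨i, rfl⟩)
  obtain ⟨n, hn⟩ := List.mem_iff_get.mp hmem
  refine ⟨Fin.cast (by simp) n, ?_⟩
  simpa [orderStat] using hn

/-- For i.i.d. scores with continuous CDF `F` and `F(t_CS) ≥ 1 - α`: on the event
`T₍₁₎ ≤ t_CS`, the probability that the surrogate classifier's type I error exceeds `α`
is at most `(2 - α - F(t_CS))^m - (1 - F(t_CS))^m`. -/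
theorem surrogate_violation_rate_bound
    {Ω : Type*} [MeasurableSpace Ω] (P : Measure Ω) [IsProbabilityMeasure P]
    (m : ℕ) (hm : 0 < m) (T : Fin m → Ω → ℝ) (hmeas : ∀ i, Measurable (T i))
    (hindep : iIndepFun T P)
    (F : ℝ → ℝ) (hF : ∀ i x, F x = (P {ω | T i ω ≤ x}).toReal)
    (hFcont : Continuous F)
    (α : ℝ) (hα : α ∈ Set.Ioo (0 : ℝ) 1)
    (tCS : ℝ) (htCS : 1 - α ≤ F tCS) :
    P ({ω | orderStat (fun i => T i ω) ⟨0, hm⟩ ≤ tCS} ∩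
        {ω | 1 - F (orderStat (fun i => T i ω) (kstarIdx hm (fun i => T i ω) tCS)) > α})
      ≤ ENNReal.ofReal ((2 - α - F tCS) ^ m - (1 - F tCS) ^ m) := by
  obtain ⟨hα0, hα1⟩ := hα
  set i0 : Fin m := ⟨0, hm⟩ with hi0
  have hF0le : ∀ x, 0 ≤ F x := fun x => by rw [hF i0 x]; exact ENNReal.toReal_nonneg
  have hFle1 : ∀ x, F x ≤ 1 := by
    intro x
    rw [hF i0 x]
    have h := prob_le_one (μ := P) (s := {ω | T i0 ω ≤ x})
    simpa using ENNReal.toReal_mono ENNReal.one_ne_top h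
  have hFmono : Monotone F := by
    intro x y hxy
    rw [hF i0 x, hF i0 y]
    exact ENNReal.toReal_mono (measure_ne_top _ _) (measure_mono fun ω h => le_trans h hxy)
  have hFP : ∀ i x, P {ω | T i ω ≤ x} = ENNReal.ofReal (F x) := by
    intro i x
    rw [hF i x, ENNReal.ofReal_toReal (measure_ne_top _ _)]
  -- existence of q with F q = 1 - α
  have hqex : ∃ q, q ≤ tCS ∧ F q = 1 - α := by
    set μ := P.map (T i0) with hμ
    have : IsProbabilityMeasure μ := Measure.isProbabilityMeasure_map (hmeas i0).aemeasurable
    have hcdf : ∀ x, cdf μ x = F x := by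
      intro x
      rw [cdf_eq_real, measureReal_def, hμ, Measure.map_apply (hmeas i0) measurableSet_Iic, hF i0 x]
      rfl
    have htend : Filter.Tendsto F Filter.atBot (nhds 0) :=
      (tendsto_cdf_atBot μ).congr hcdf
    have hev : ∀ᶠ x in Filter.atBot, F x < 1 - α :=
      htend.eventually_lt_const (by linarith)
    obtain ⟨x0, hx0⟩ := hev.exists
    have hx0le : x0 ≤ tCS := by
      by_contra h
      push_neg at h
      exact absurd (le_trans htCS (hFmono h.le)) (not_le.mpr hx0)
    obtain ⟨q, hqmem, hFq⟩ :=
      intermediate_value_Icc hx0le hFcont.continuousOn ⟨hx0.le, htCS⟩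
    exact ⟨q, hqmem.2, hFq⟩
  obtain ⟨q, hqle, hFq⟩ := hqex
  set u : ℝ := 1 - F tCS with hudef
  have hu0 : 0 ≤ u := by have := hFle1 tCS; simp only [hudef]; linarith
  have h1αu : (0:ℝ) ≤ 1 - α + u := by linarith
  set S : Set ℝ := Set.Ioi tCS ∪ {x | F x < 1 - α} with hSdef
  have hSmeas : MeasurableSet S :=
    (isOpen_Ioi.union (isOpen_lt hFcont continuous_const)).measurableSet
  -- per-coordinate probabilities
  have hIoi : ∀ i, P (T i ⁻¹' Set.Ioi tCS) = ENNReal.ofReal u := by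
    intro i
    have hcompl : T i ⁻¹' Set.Ioi tCS = {ω | T i ω ≤ tCS}ᶜ := by
      ext ω; simp [not_le]
    have hms : MeasurableSet {ω | T i ω ≤ tCS} := hmeas i measurableSet_Iic
    rw [hcompl, measure_compl hms (measure_ne_top _ _),
      hFP i tCS, measure_univ, hudef, ← ENNReal.ofReal_one,
      ← ENNReal.ofReal_sub _ (hF0le tCS)]
  have hS_le : ∀ i, P (T i ⁻¹' S) ≤ ENNReal.ofReal (1 - α + u) := by
    intro i
    have hsub : S ⊆ Set.Ioi tCS ∪ Set.Iio q := by
      intro x hx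
      rcases hx with hx | hx
      · exact Or.inl hx
      · right
        by_contra h
        simp only [Set.mem_Iio, not_lt] at h
        exact absurd (hFq ▸ hFmono h) (not_le.mpr hx)
    calc P (T i ⁻¹' S) ≤ P (T i ⁻¹' Set.Ioi tCS ∪ T i ⁻¹' Set.Iio q) := by
          refine measure_mono ?_
          rw [← Set.preimage_union]
          exact Set.preimage_mono hsub
      _ ≤ P (T i ⁻¹' Set.Ioi tCS) + P (T i ⁻¹' Set.Iio q) := measure_union_le _ _
      _ ≤ ENNReal.ofReal u + ENNReal.ofReal (1 - α) := by
          refine add_le_add (le_of_eq (hIoi i)) ?_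
          calc P (T i ⁻¹' Set.Iio q) ≤ P {ω | T i ω ≤ q} := by
                refine measure_mono ?_
                intro ω h
                show T i ω ≤ q
                exact (Set.mem_Iio.mp h).le
            _ = ENNReal.ofReal (F q) := hFP i q
            _ = ENNReal.ofReal (1 - α) := by rw [hFq]
      _ = ENNReal.ofReal (1 - α + u) := by
          rw [← ENNReal.ofReal_add hu0 (by linarith)]
          ring_nf
  -- independence products
  set G : Set Ω := ⋂ i ∈ (Finset.univ : Finset (Fin m)), T i ⁻¹' S with hGdef
  set H : Set Ω := ⋂ i ∈ (Finset.univ : Finset (Fin m)), T i ⁻¹' Set.Ioi tCS with hHdef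
  have hPG : P G ≤ ENNReal.ofReal ((1 - α + u) ^ m) := by
    rw [hGdef, hindep.measure_inter_preimage_eq_mul Finset.univ (fun i _ => hSmeas)]
    calc ∏ i : Fin m, P (T i ⁻¹' S) ≤ ∏ _i : Fin m, ENNReal.ofReal (1 - α + u) :=
          Finset.prod_le_prod' (fun i _ => hS_le i)
      _ = ENNReal.ofReal (1 - α + u) ^ m := by
          rw [Finset.prod_const, Finset.card_univ, Fintype.card_fin]
      _ = ENNReal.ofReal ((1 - α + u) ^ m) := by
          rw [ENNReal.ofReal_pow h1αu]
  have hPH : P H = ENNReal.ofReal (u ^ m) := by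
    rw [hHdef,
      hindep.measure_inter_preimage_eq_mul Finset.univ (fun i _ => measurableSet_Ioi)]
    calc ∏ i : Fin m, P (T i ⁻¹' Set.Ioi tCS) = ∏ _i : Fin m, ENNReal.ofReal u :=
          Finset.prod_congr rfl (fun i _ => hIoi i)
      _ = ENNReal.ofReal u ^ m := by
          rw [Finset.prod_const, Finset.card_univ, Fintype.card_fin]
      _ = ENNReal.ofReal (u ^ m) := by rw [ENNReal.ofReal_pow hu0]
  have hHG : H ⊆ G := by
    refine Set.iInter₂_mono fun i _ => Set.preimage_mono fun x hx => Or.inl hx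
  have hHmeas : MeasurableSet H :=
    MeasurableSet.biInter (Set.to_countable _) fun i _ => hmeas i measurableSet_Ioi
  -- inclusion of the event in G \ H
  have hsub : ({ω | orderStat (fun i => T i ω) i0 ≤ tCS} ∩
      {ω | 1 - F (orderStat (fun i => T i ω) (kstarIdx hm (fun i => T i ω) tCS)) > α})
      ⊆ G \ H := by
    rintro ω ⟨h1, h2⟩
    simp only [Set.mem_setOf_eq] at h1 h2
    set v : Fin m → ℝ := fun i => T i ω with hv
    have hne : ((Finset.univ : Finset (Fin m)).filter (fun k => orderStat v k ≤ tCS)).Nonempty :=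
      ⟨i0, Finset.mem_filter.mpr ⟨Finset.mem_univ _, h1⟩⟩
    have hkdef : kstarIdx hm v tCS = Finset.max' _ hne := dif_pos hne
    have hk2 : F (orderStat v (kstarIdx hm v tCS)) < 1 - α := by linarith
    have hall : ∀ i, v i ≤ tCS → F (v i) < 1 - α := by
      intro i hvi
      obtain ⟨k, hk⟩ := exists_orderStat_eq v i
      have hkfil : k ∈ Finset.univ.filter (fun k => orderStat v k ≤ tCS) :=
        Finset.mem_filter.mpr ⟨Finset.mem_univ _, by rw [hk]; exact hvi⟩
      have hle : k ≤ kstarIdx hm v tCS := by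
        rw [hkdef]; exact Finset.le_max' _ _ hkfil
      calc F (v i) = F (orderStat v k) := by rw [hk]
        _ ≤ F (orderStat v (kstarIdx hm v tCS)) := hFmono (orderStat_mono v hle)
        _ < 1 - α := hk2
    constructor
    · simp only [hGdef, Set.mem_iInter, Set.mem_preimage, hSdef, Set.mem_union, Set.mem_Ioi,
        Set.mem_setOf_eq]
      intro i _
      by_cases hvi : v i ≤ tCS
      · exact Or.inr (hall i hvi)
      · exact Or.inl (lt_of_not_ge hvi)
    · intro hH
      simp only [hHdef, Set.mem_iInter, Set.mem_preimage, Set.mem_Ioi] at hH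
      obtain ⟨i, hi⟩ := orderStat_mem v i0
      have : tCS < orderStat v i0 := hi ▸ hH i (Finset.mem_univ i)
      linarith
  -- assemble
  have hfinal : (2 - α - F tCS) ^ m - (1 - F tCS) ^ m = (1 - α + u) ^ m - u ^ m := by
    rw [hudef]; ring_nf
  rw [hfinal]
  calc P _ ≤ P (G \ H) := measure_mono hsub
    _ = P G - P H := measure_diff hHG hHmeas.nullMeasurableSet (measure_ne_top _ _)
    _ ≤ ENNReal.ofReal ((1 - α + u) ^ m) - ENNReal.ofReal (u ^ m) :=
        tsub_le_tsub hPG (le_of_eq hPH.symm)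
    _ = ENNReal.ofReal ((1 - α + u) ^ m - u ^ m) :=
        (ENNReal.ofReal_sub _ (pow_nonneg hu0 m)).symm
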